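/- Let c, m > 0 and M = c[[m,1],[1,m]]. The 4×4 matrix Q with entries Q = [[e^{2β}c²m², c²m, c²m, e^{2β}c²], [c²m, e^{-2β}c²m², e^{-2β}c², c²m], [c²m, e^{-2β}c², e^{-2β}c²m², c²m], [e^{2β}c², c²m, c²m, e^{2β}c²m²]] has characteristic polynomial with roots λ₁ = c²e^{2β}(m²-1), λ₂ = c²e^{-2β}(m²-1), and λ_{3,4} = c²(m²+1)cosh(2β)(1 ∓ √(1 - (m²-1)²/((m²+1)² cosh²(2β)))). -/

import Mathlib

open Matrix Polynomial in
private lemma det4_formula (a b c d e f g h i j k l m n o p : ℝ) :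
    (!![a,b,c,d; e,f,g,h; i,j,k,l; m,n,o,p]).det =
      a*(f*(k*p-l*o) - g*(j*p-l*n) + h*(j*o-k*n))
      - b*(e*(k*p-l*o) - g*(i*p-l*m) + h*(i*o-k*m))
      + c*(e*(j*p-l*n) - f*(i*p-l*m) + h*(i*n-j*m))
      - d*(e*(j*o-k*n) - f*(i*o-k*m) + g*(i*n-j*m)) := by
  simp [Matrix.det_succ_row_zero, Fin.sum_univ_succ, Fin.succAbove_of_lt_succ, Fin.succAbove_of_succ_le]
  ring

set_option maxHeartbeats 1600000 in
open Matrix in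
theorem eigenvalues_Q (β c m : ℝ) (hc : 0 < c) (hm : 0 < m) :
    let Q : Matrix (Fin 4) (Fin 4) ℝ :=
      !![Real.exp (2*β) * c^2 * m^2, c^2 * m, c^2 * m, Real.exp (2*β) * c^2;
         c^2 * m, Real.exp (-(2*β)) * c^2 * m^2, Real.exp (-(2*β)) * c^2, c^2 * m;
         c^2 * m, Real.exp (-(2*β)) * c^2, Real.exp (-(2*β)) * c^2 * m^2, c^2 * m;
         Real.exp (2*β) * c^2, c^2 * m, c^2 * m, Real.exp (2*β) * c^2 * m^2]
    ∀ x : ℝ, Q.charpoly.IsRoot x ↔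
      x = c^2 * Real.exp (2*β) * (m^2 - 1) ∨
      x = c^2 * Real.exp (-(2*β)) * (m^2 - 1) ∨
      x = c^2 * (m^2 + 1) * Real.cosh (2*β) *
            (1 - Real.sqrt (1 - (m^2 - 1)^2 / ((m^2 + 1)^2 * Real.cosh (2*β) ^ 2))) ∨
      x = c^2 * (m^2 + 1) * Real.cosh (2*β) *
            (1 + Real.sqrt (1 - (m^2 - 1)^2 / ((m^2 + 1)^2 * Real.cosh (2*β) ^ 2))) := by
  intro Q x
  have hE : (0:ℝ) < Real.exp (2*β) := Real.exp_pos _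
  have hF : (0:ℝ) < Real.exp (-(2*β)) := Real.exp_pos _
  have hFE : Real.exp (-(2*β)) = (Real.exp (2*β))⁻¹ := by rw [← Real.exp_neg]
  have hcoshpos : (0:ℝ) < Real.cosh (2*β) := Real.cosh_pos _
  have hcosh : Real.cosh (2*β) = (Real.exp (2*β) + Real.exp (-(2*β)))/2 := by
    rw [Real.cosh_eq]
  set A : ℝ := c^2*(m^2+1)*Real.cosh (2*β) with hA
  have hApos : 0 < A := by positivity
  set P : ℝ := c^4*(m^2-1)^2 with hP
  have hD : 0 ≤ A^2 - P := by
    have h1 : (1:ℝ) ≤ Real.cosh (2*β) := Real.one_le_cosh _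
    have hc2 : (1:ℝ) ≤ Real.cosh (2*β)^2 := by nlinarith
    have h2 : (m^2-1)^2 ≤ (m^2+1)^2 * Real.cosh (2*β)^2 := by
      nlinarith [sq_nonneg m, sq_nonneg (m^2+1), hc2]
    have key : c^4*(m^2-1)^2 ≤ c^4*((m^2+1)^2 * Real.cosh (2*β)^2) :=
      mul_le_mul_of_nonneg_left h2 (by positivity)
    rw [hA, hP]
    nlinarith [key]
  -- Step 1: evaluate the characteristic polynomial
  have heval : Q.charpoly.eval x =
      (x - c^2 * Real.exp (2*β) * (m^2-1)) * (x - c^2 * Real.exp (-(2*β)) * (m^2-1)) *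
      (x^2 - 2*A*x + P) := by
    have h1 : Q.charpoly.eval x = (Matrix.scalar (Fin 4) x - Q).det := by
      rw [Matrix.charpoly, eval_det, matPolyEquiv_charmatrix]
      simp
    have h2 : Matrix.scalar (Fin 4) x - Q =
        !![x - Real.exp (2*β) * c^2 * m^2, -(c^2 * m), -(c^2 * m), -(Real.exp (2*β) * c^2);
           -(c^2 * m), x - Real.exp (-(2*β)) * c^2 * m^2, -(Real.exp (-(2*β)) * c^2), -(c^2 * m);
           -(c^2 * m), -(Real.exp (-(2*β)) * c^2), x - Real.exp (-(2*β)) * c^2 * m^2, -(c^2 * m);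
           -(Real.exp (2*β) * c^2), -(c^2 * m), -(c^2 * m), x - Real.exp (2*β) * c^2 * m^2] := by
      ext i j
      fin_cases i <;> fin_cases j <;>
        simp [Q, Matrix.scalar_apply, Matrix.diagonal_apply, Matrix.sub_apply]
    rw [h1, h2, det4_formula, hA, hP, hcosh, hFE]
    have hE' : Real.exp (2*β) ≠ 0 := hE.ne'
    field_simp
    ring
  -- Step 2: the square root identity
  have hu : 1 - (m^2-1)^2/((m^2+1)^2*Real.cosh (2*β)^2) = (A^2 - P)/A^2 := by
    rw [hA, hP]
    field_simp
  have hs : A * Real.sqrt (1 - (m^2-1)^2/((m^2+1)^2*Real.cosh (2*β)^2)) =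
      Real.sqrt (A^2 - P) := by
    rw [hu, Real.sqrt_div hD, Real.sqrt_sq hApos.le]
    field_simp
  -- Step 3: roots of the quadratic factor
  have hquad : x^2 - 2*A*x + P = 0 ↔
      (x = A - Real.sqrt (A^2-P) ∨ x = A + Real.sqrt (A^2-P)) := by
    have h2 : x^2 - 2*A*x + P = (x - A)^2 - (Real.sqrt (A^2-P))^2 := by
      rw [Real.sq_sqrt hD]; ring
    rw [h2, sub_eq_zero, sq_eq_sq_iff_eq_or_eq_neg]
    constructor
    · rintro (h | h)
      · right; linarith
      · left; linarith
    · rintro (h | h)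
      · right; linarith
      · left; linarith
  -- Conclusion
  rw [Polynomial.IsRoot.def, heval, mul_eq_zero, mul_eq_zero, sub_eq_zero, sub_eq_zero, hquad]
  have e3 : A - Real.sqrt (A^2-P) =
      c^2 * (m^2 + 1) * Real.cosh (2*β) *
        (1 - Real.sqrt (1 - (m^2 - 1)^2 / ((m^2 + 1)^2 * Real.cosh (2*β) ^ 2))) := by
    rw [← hs, hA]; ring
  have e4 : A + Real.sqrt (A^2-P) =
      c^2 * (m^2 + 1) * Real.cosh (2*β) *
        (1 + Real.sqrt (1 - (m^2 - 1)^2 / ((m^2 + 1)^2 * Real.cosh (2*β) ^ 2))) := by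
    rw [← hs, hA]; ring
  rw [e3, e4]
  tauto
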